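/- Let ε > 0 and let u : ℝ → ℝ^N be differentiable at a point x₀ ∈ ℝ with ε + Σ_{l=1}^N f(l)u_l(x₀) > 0. Then, for each 1 ≤ n ≤ N, the function x ↦ B^ε_n(u(x))·u_n(x) is differentiable at x₀ and its derivative at x₀ equals Σ_{k=1}^N A^ε_{nk}(u(x₀))·u_k′(x₀); in other words, ∂_x[B^ε(u)u] = A^ε(u)∂_x u. -/

import Mathlib

open Finset Matrix

/-- `B^ε_n(u) = (ε + f(n) Σ_k u_k) / (ε + Σ_k f(k) u_k)`. -/
noncomputable def Bv (N : ℕ) (f : Fin N → ℝ) (ε : ℝ) (u : Fin N → ℝ) (n : Fin N) : ℝ :=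
  (ε + f n * ∑ k, u k) / (ε + ∑ k, f k * u k)

/-- The matrix `A^ε(u)`. -/
noncomputable def Amat (N : ℕ) (f : Fin N → ℝ) (ε : ℝ) (u : Fin N → ℝ) :
    Matrix (Fin N) (Fin N) ℝ :=
  Matrix.of fun n k =>
    if n = k then
      Bv N f ε u n + u n * (f n * ∑ l, (f l - f n) * u l) / (ε + ∑ l, f l * u l) ^ 2
    else
      u n * (ε * (f n - f k) + f n * ∑ l, (f l - f k) * u l) / (ε + ∑ l, f l * u l) ^ 2

/-- Chain rule identity `∂_x[B^ε(u)u] = A^ε(u) ∂_x u`: if `u : ℝ → ℝ^N` is differentiable at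
`x₀` with derivative `u′` and `ε + Σ_l f(l)u_l(x₀) > 0`, then for each `n` the function
`x ↦ B^ε_n(u(x)) u_n(x)` has derivative `Σ_k A^ε_{nk}(u(x₀)) u′_k` at `x₀`. -/
theorem hasDerivAt_B_mul (N : ℕ) (hN : 2 ≤ N) (f : Fin N → ℝ) (hf : ∀ n, 0 < f n)
    (ε : ℝ) (hε : 0 < ε) (u : ℝ → Fin N → ℝ) (u' : Fin N → ℝ) (x₀ : ℝ)
    (hu : ∀ n, HasDerivAt (fun x => u x n) (u' n) x₀)
    (hpos : 0 < ε + ∑ l, f l * u x₀ l) :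
    ∀ n : Fin N,
      HasDerivAt (fun x => Bv N f ε (u x) n * u x n)
        (∑ k, Amat N f ε (u x₀) n k * u' k) x₀ := by
  intro n
  set s : ℝ := ∑ k, u x₀ k with hs
  set t : ℝ := ∑ k, f k * u x₀ k with ht
  set s' : ℝ := ∑ k, u' k with hs'
  set t' : ℝ := ∑ k, f k * u' k with ht'
  have hQne : ε + t ≠ 0 := ne_of_gt hpos
  have hS : HasDerivAt (fun x => ∑ k, u x k) s' x₀ := HasDerivAt.fun_sum fun k _ => hu k
  have hT : HasDerivAt (fun x => ∑ k, f k * u x k) t' x₀ :=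
    HasDerivAt.fun_sum fun k _ => (hu k).const_mul (f k)
  have hP : HasDerivAt (fun x => (ε + f n * ∑ k, u x k) * u x n)
      ((f n * s') * u x₀ n + (ε + f n * s) * u' n) x₀ :=
    ((hS.const_mul (f n)).const_add ε).mul (hu n)
  have hQ : HasDerivAt (fun x => ε + ∑ k, f k * u x k) t' x₀ := hT.const_add ε
  have hmain := hP.div hQ hQne
  have heq : (fun x => Bv N f ε (u x) n * u x n)
      = fun x => ((ε + f n * ∑ k, u x k) * u x n) / (ε + ∑ k, f k * u x k) := by
    funext x; simp [Bv, div_mul_eq_mul_div]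
  rw [heq]
  refine HasDerivAt.congr_deriv hmain (Eq.symm ?_)
  have hsum : ∀ k : Fin N, (∑ l, (f l - f k) * u x₀ l) = t - f k * s := by
    intro k
    simp [sub_mul, Finset.sum_sub_distrib, ← Finset.mul_sum, ht, hs]
  have hA : ∀ k : Fin N, Amat N f ε (u x₀) n k * u' k =
      (if n = k then (ε + f n * s) / (ε + t) * u' k else 0)
      + (u x₀ n / (ε + t) ^ 2 * ((ε * f n + f n * t) * u' k)
         - u x₀ n / (ε + t) ^ 2 * ((ε + f n * s) * (f k * u' k))) := by
    intro k
    by_cases h : n = k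
    · subst h
      simp only [Amat, Matrix.of_apply, Bv, hsum, ← hs, ← ht, if_true, eq_self_iff_true]
      ring
    · simp only [Amat, Matrix.of_apply, if_neg h, hsum, ← hs, ← ht]
      ring
  rw [Finset.sum_congr rfl fun k _ => hA k, Finset.sum_add_distrib,
    Finset.sum_ite_eq univ n (fun k => (ε + f n * s) / (ε + t) * u' k),
    Finset.sum_sub_distrib]
  have h1 : ∑ k : Fin N, u x₀ n / (ε + t) ^ 2 * ((ε * f n + f n * t) * u' k)
      = u x₀ n / (ε + t) ^ 2 * ((ε * f n + f n * t) * s') := by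
    rw [hs']; simp [Finset.mul_sum]
  have h2 : ∑ k : Fin N, u x₀ n / (ε + t) ^ 2 * ((ε + f n * s) * (f k * u' k))
      = u x₀ n / (ε + t) ^ 2 * ((ε + f n * s) * t') := by
    rw [ht']; simp [Finset.mul_sum]
  rw [h1, h2, ← hs, ← ht]
  simp only [mem_univ, if_pos]
  field_simp
  ring
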